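/- Fix c₊, c₋ > 0, a₊, a₋ ≥ c₀ > 0, φ₀ ∈ (π/3, π/2), φ ∈ (0, φ₀ − π/3). Define for λ ∈ Σ_{π−φ₀}, z ∈ Σ_φ, δ, σ ≥ 0, κ ≥ 1: m(λ,z) = λ + κ + (σz + δ(λ+κ))(√c₊ ω₊ + √c₋ ω₋) + a₊√c₊ ω₊ + a₋√c₋ ω₋, with ω_± = √(λ+κ+c_± z). Then there is a constant c₂ > 0 (independent of λ, z, δ ∈ [0,δ*], σ ∈ [0,σ*], κ ≥ 1) such that |m(λ,z)| ≥ c₂ [ |λ| + κ + σ|z|(√|λ| + √κ + √(c₊|z|) + √(c₋|z|)) + δ(|λ|+κ)(√|λ| + √κ + √(c₊|z|) + √(c₋|z|)) + a₊(√|λ| + √κ + √(c₊|z|)) + a₋(√|λ| + √κ + √(c₋|z|)) ]. -/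

import Mathlib

open Real Complex

lemma arg_rot {w : ℂ} (hw : w ≠ 0) (d : ℝ) (h1 : -π < Complex.arg w + d)
    (h2 : Complex.arg w + d ≤ π) :
    Complex.arg (Complex.exp (d * Complex.I) * w) = Complex.arg w + d := by
  have hab : (0:ℝ) < ‖w‖ := norm_pos_iff.mpr hw
  have key : Complex.exp (d * Complex.I) * w
      = (‖w‖ : ℂ) * Complex.exp ((Complex.arg w + d : ℝ) * Complex.I) := by
    conv_lhs => rw [← Complex.norm_mul_exp_arg_mul_I w]
    rw [← mul_assoc, mul_comm (Complex.exp _), mul_assoc, ← Complex.exp_add]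
    push_cast
    ring_nf
  rw [key, Complex.exp_mul_I, Complex.arg_mul_cos_add_sin_mul_I hab ⟨h1, h2⟩]

lemma rot_decomp (w : ℂ) (d : ℝ) :
    Complex.exp (d * Complex.I) * w
      = (‖w‖ : ℂ) * Complex.exp ((Complex.arg w + d : ℝ) * Complex.I) := by
  conv_lhs => rw [← Complex.norm_mul_exp_arg_mul_I w]
  rw [← mul_assoc, mul_comm (Complex.exp _), mul_assoc, ← Complex.exp_add]
  push_cast
  ring_nf

lemma rot_re (w : ℂ) (d : ℝ) :
    (Complex.exp (d * Complex.I) * w).re = ‖w‖ * Real.cos (Complex.arg w + d) := by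
  rw [rot_decomp w d]
  rw [Complex.re_ofReal_mul, Complex.exp_ofReal_mul_I_re]

lemma rot_im (w : ℂ) (d : ℝ) :
    (Complex.exp (d * Complex.I) * w).im = ‖w‖ * Real.sin (Complex.arg w + d) := by
  rw [rot_decomp w d]
  rw [Complex.im_ofReal_mul, Complex.exp_ofReal_mul_I_im]

/-- hull lemma -/
lemma arg_add_mem {w₁ w₂ : ℂ} {a b : ℝ} (h1 : w₁ ≠ 0) (h2 : w₂ ≠ 0)
    (ha : -π < a) (hb : b < π) (hab : b - a < π)
    (ha1 : a ≤ Complex.arg w₁) (hb1 : Complex.arg w₁ ≤ b)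
    (ha2 : a ≤ Complex.arg w₂) (hb2 : Complex.arg w₂ ≤ b) :
    w₁ + w₂ ≠ 0 ∧ a ≤ Complex.arg (w₁ + w₂) ∧ Complex.arg (w₁ + w₂) ≤ b := by
  have hle : a ≤ b := le_trans ha1 hb1
  set c : ℝ := (a + b) / 2 with hc
  have hB : b - c = (b - a) / 2 := by rw [hc]; ring
  have hA : a - c = -((b - a) / 2) := by rw [hc]; ring
  have hBlt : (b - a) / 2 < π / 2 := by linarith
  have hBnn : 0 ≤ (b - a) / 2 := by linarith
  set V := Complex.exp (((-c : ℝ) : ℂ) * Complex.I) * (w₁ + w₂) with hV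
  have hVsum : V = Complex.exp (((-c : ℝ) : ℂ) * Complex.I) * w₁
      + Complex.exp (((-c : ℝ) : ℂ) * Complex.I) * w₂ := by
    rw [hV]; ring
  have harg : ∀ w : ℂ, w ≠ 0 → a ≤ Complex.arg w → Complex.arg w ≤ b →
      (0 < (Complex.exp (((-c : ℝ) : ℂ) * Complex.I) * w).re ∧
        (Complex.exp (((-c : ℝ) : ℂ) * Complex.I) * w).im * Real.cos (b - c)
          ≤ Real.sin (b - c) * (Complex.exp (((-c : ℝ) : ℂ) * Complex.I) * w).re ∧
        Real.sin (a - c) * (Complex.exp (((-c : ℝ) : ℂ) * Complex.I) * w).re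
          ≤ (Complex.exp (((-c : ℝ) : ℂ) * Complex.I) * w).im * Real.cos (a - c)) := by
    intro w hw hwa hwb
    have habs : 0 < ‖w‖ := norm_pos_iff.mpr hw
    have hξ1 : -((b-a)/2) ≤ Complex.arg w + -c := by rw [hc]; linarith
    have hξ2 : Complex.arg w + -c ≤ (b-a)/2 := by rw [hc]; linarith
    rw [rot_re w (-c), rot_im w (-c)]
    refine ⟨mul_pos habs ?_, ?_, ?_⟩
    · apply Real.cos_pos_of_mem_Ioo
      constructor <;> linarith
    · have : Real.sin (Complex.arg w + -c - (b - c)) ≤ 0 := by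
        apply Real.sin_nonpos_of_nonpos_of_neg_pi_le
        · linarith
        · rw [hB]; linarith
      rw [Real.sin_sub] at this
      nlinarith [habs]
    · have : 0 ≤ Real.sin (Complex.arg w + -c - (a - c)) := by
        apply Real.sin_nonneg_of_nonneg_of_le_pi
        · rw [hA]; linarith
        · rw [hA]; linarith
      rw [Real.sin_sub] at this
      nlinarith [habs]
  obtain ⟨hre1, him1u, him1l⟩ := harg w₁ h1 ha1 hb1
  obtain ⟨hre2, him2u, him2l⟩ := harg w₂ h2 ha2 hb2
  have hVre : 0 < V.re := by rw [hVsum, Complex.add_re]; linarith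
  have hVne : V ≠ 0 := fun h => by simp [h] at hVre
  have hsumne : w₁ + w₂ ≠ 0 := by
    intro h; rw [h, mul_zero] at hV; exact hVne hV
  have hVabs : 0 < ‖V‖ := norm_pos_iff.mpr hVne
  have hargV : |Complex.arg V| < π / 2 := by
    rw [Complex.abs_arg_lt_pi_div_two_iff]
    left; exact hVre
  have hargV1 : -(π/2) < Complex.arg V := (abs_lt.mp hargV).1
  have hargV2 : Complex.arg V < π/2 := (abs_lt.mp hargV).2
  have hUb : Complex.arg V ≤ b - c := by
    by_contra hcon
    push_neg at hcon
    have hsin : 0 < Real.sin (Complex.arg V - (b - c)) := by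
      apply Real.sin_pos_of_pos_of_lt_pi
      · linarith
      · rw [hB]; linarith [Real.pi_pos]
    rw [Real.sin_sub, Complex.sin_arg, Complex.cos_arg hVne] at hsin
    have hIm : V.im * Real.cos (b - c) ≤ Real.sin (b - c) * V.re := by
      rw [hVsum, Complex.add_im, Complex.add_re]; linarith
    rw [div_mul_eq_mul_div, div_mul_eq_mul_div, ← sub_div] at hsin
    have := (div_pos_iff.mp hsin)
    rcases this with ⟨hnum, _⟩ | ⟨_, hden⟩
    · linarith
    · linarith
  have hLb : a - c ≤ Complex.arg V := by
    by_contra hcon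
    push_neg at hcon
    have hsin : Real.sin (Complex.arg V - (a - c)) < 0 := by
      have h1' : 0 < -(Complex.arg V - (a - c)) := by linarith
      have h2' : -(Complex.arg V - (a - c)) < π := by rw [hA]; linarith [Real.pi_pos]
      have := Real.sin_pos_of_pos_of_lt_pi h1' h2'
      rw [Real.sin_neg] at this; linarith
    rw [Real.sin_sub, Complex.sin_arg, Complex.cos_arg hVne] at hsin
    have hIm : Real.sin (a - c) * V.re ≤ V.im * Real.cos (a - c) := by
      rw [hVsum, Complex.add_im, Complex.add_re]; linarith
    rw [div_mul_eq_mul_div, div_mul_eq_mul_div, ← sub_div] at hsin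
    have := (div_neg_iff.mp hsin)
    rcases this with ⟨_, hden⟩ | ⟨hnum, _⟩
    · linarith
    · linarith
  have hfin : Complex.arg (w₁ + w₂) = Complex.arg V + c := by
    have hwV : w₁ + w₂ = Complex.exp ((c : ℂ) * Complex.I) * V := by
      rw [hV, ← mul_assoc, ← Complex.exp_add]
      have : (c : ℂ) * Complex.I + ((-c : ℝ) : ℂ) * Complex.I = 0 := by push_cast; ring
      rw [this, Complex.exp_zero, one_mul]
    rw [hwV, arg_rot hVne c (by linarith) (by rw [hB] at hUb; nlinarith [Real.pi_pos])]
  refine ⟨hsumne, ?_, ?_⟩ <;> rw [hfin] <;> linarith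

lemma arg_mul' {x y : ℂ} (hx : x ≠ 0) (hy : y ≠ 0) (h1 : -π < Complex.arg x + Complex.arg y)
    (h2 : Complex.arg x + Complex.arg y ≤ π) :
    Complex.arg (x * y) = Complex.arg x + Complex.arg y := by
  have hxa : (0:ℝ) < ‖x‖ := norm_pos_iff.mpr hx
  have h3 : x * y = Complex.exp (Complex.arg x * Complex.I) * ((‖x‖ : ℂ) * y) := by
    conv_lhs => rw [← Complex.norm_mul_exp_arg_mul_I x]
    ring
  have h4 : Complex.arg ((‖x‖ : ℂ) * y) = Complex.arg y := Complex.arg_real_mul y hxa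
  rw [h3, arg_rot (by simp [hy, hxa.ne']) (Complex.arg x) (by rw [h4]; linarith)
    (by rw [h4]; linarith), h4]
  ring

/-- abs and arg of the principal square root. -/
lemma sqrt_abs_arg {w : ℂ} (hw : w ≠ 0) :
    ‖(w ^ ((1 : ℂ) / 2))‖ = Real.sqrt (‖w‖) ∧
      Complex.arg (w ^ ((1 : ℂ) / 2)) = Complex.arg w / 2 := by
  have habs : 0 < ‖w‖ := norm_pos_iff.mpr hw
  have hlog : Complex.log w * ((1:ℂ)/2)
      = ((Real.log (‖w‖) / 2 : ℝ) : ℂ) + ((Complex.arg w / 2 : ℝ) : ℂ) * Complex.I := by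
    rw [Complex.log]
    push_cast
    ring
  have hpow : w ^ ((1 : ℂ) / 2)
      = ((Real.exp (Real.log (‖w‖) / 2) : ℝ) : ℂ)
        * Complex.exp (((Complex.arg w / 2 : ℝ) : ℂ) * Complex.I) := by
    rw [Complex.cpow_def_of_ne_zero hw, hlog, Complex.exp_add, Complex.ofReal_exp]
  have hxpos : 0 < Real.exp (Real.log (‖w‖) / 2) := Real.exp_pos _
  have hxsq : Real.exp (Real.log (‖w‖) / 2) ^ 2 = ‖w‖ := by
    rw [← Real.exp_nat_mul]
    have h2 : (2:ℕ) * (Real.log (‖w‖) / 2) = Real.log (‖w‖) := by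
      push_cast; ring
    rw [h2, Real.exp_log habs]
  have hIoc : Complex.arg w / 2 ∈ Set.Ioc (-π) π := by
    constructor
    · have := Complex.neg_pi_lt_arg w
      linarith [Real.pi_pos]
    · have := Complex.arg_le_pi w
      linarith [Real.pi_pos]
  constructor
  · rw [hpow, norm_mul, Complex.norm_exp_ofReal_mul_I, mul_one, Complex.norm_real, Real.norm_eq_abs,
      abs_of_pos hxpos]
    conv_rhs => rw [← hxsq, Real.sqrt_sq hxpos.le]
  · rw [hpow, Complex.exp_mul_I]
    exact Complex.arg_mul_cos_add_sin_mul_I hxpos hIoc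

/-- lower bound for the real part of a rotated vector -/
lemma re_rot_ge (u : ℂ) (ψ ε : ℝ) (hε : 0 < ε) (h : |Complex.arg u - ψ| ≤ π/2 - ε) :
    Real.sin ε * ‖u‖ ≤ (Complex.exp (((-ψ : ℝ) : ℂ) * Complex.I) * u).re := by
  rcases eq_or_ne u 0 with rfl | hu
  · simp
  have hεle : π/2 - ε ≤ π := by linarith [Real.pi_pos]
  have h1 : Real.cos (π/2 - ε) ≤ Real.cos (Complex.arg u + -ψ) := by
    rw [← Real.cos_abs (Complex.arg u + -ψ)]
    apply Real.cos_le_cos_of_nonneg_of_le_pi (abs_nonneg _)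
    · have : |Complex.arg u + -ψ| ≤ π/2 - ε := by rw [← sub_eq_add_neg]; exact h
      linarith
    · rw [← sub_eq_add_neg]; exact h
  rw [rot_re u (-ψ)]
  rw [Real.cos_pi_div_two_sub] at h1
  nlinarith [norm_nonneg u, h1]

lemma le_of_sq {x y : ℝ} (hx : 0 ≤ x) (hy : 0 ≤ y) (h : x^2 ≤ y^2) : x ≤ y := by nlinarith

lemma L_M1 {X K r s : ℝ} (hX : 0 ≤ X) (hK : 0 ≤ K) (hr : -(1/2)*X ≤ r) (hs : 0 ≤ s)
    (hsq : s^2 = X^2 + 2*K*r + K^2) : (X+K)/2 ≤ s := by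
  apply le_of_sq (by positivity) hs
  nlinarith [sq_nonneg (X - K)]

lemma L_M2 {a b s dot : ℝ} (ha : 0 ≤ a) (hb : 0 ≤ b) (hdot : -(1/2)*(a*b) ≤ dot) (hs : 0 ≤ s)
    (hsq : s^2 = a^2 + 2*dot + b^2) : (a+b)/2 ≤ s := by
  apply le_of_sq (by positivity) hs
  nlinarith [sq_nonneg (a - b)]

lemma L_dotge {a b c' : ℝ} (ha : 0 ≤ a) (hb : 0 ≤ b) (hc : -(1/2) ≤ c') :
    -(1/2)*(a*b) ≤ a*b*c' := by
  nlinarith [mul_nonneg (mul_nonneg ha hb) (by linarith : (0:ℝ) ≤ c' + 1/2)]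

lemma L_sqrt {x y w d : ℝ} (hx : 0 ≤ x) (hy : 0 ≤ y) (hw : 0 ≤ w)
    (h : (x+y+w)/4 ≤ d) : (Real.sqrt x + Real.sqrt y + Real.sqrt w)/6 ≤ Real.sqrt d := by
  have hd : 0 ≤ d := le_trans (by positivity) h
  apply le_of_sq (by positivity) (Real.sqrt_nonneg _)
  rw [Real.sq_sqrt hd]
  nlinarith [Real.sq_sqrt hx, Real.sq_sqrt hy, Real.sq_sqrt hw,
    sq_nonneg (Real.sqrt x - Real.sqrt y), sq_nonneg (Real.sqrt x - Real.sqrt w),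
    sq_nonneg (Real.sqrt y - Real.sqrt w), Real.sqrt_nonneg x, Real.sqrt_nonneg y,
    Real.sqrt_nonneg w]

noncomputable def omegaPM (cpm κ : ℝ) (l z : ℂ) : ℂ :=
  (l + (κ : ℂ) + (cpm : ℂ) * z) ^ ((1 : ℂ) / 2)

/-- The Stefan symbol
`m(λ,z) = λ+κ + (σz + δ(λ+κ))(√c₊ω₊ + √c₋ω₋) + a₊√c₊ω₊ + a₋√c₋ω₋`. -/
noncomputable def stefanSymbol (cP cM κ δ σ aP aM : ℝ) (l z : ℂ) : ℂ :=
  l + (κ : ℂ)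
  + ((σ : ℂ) * z + (δ : ℂ) * (l + (κ : ℂ))) *
      ((Real.sqrt cP : ℂ) * omegaPM cP κ l z + (Real.sqrt cM : ℂ) * omegaPM cM κ l z)
  + (aP : ℂ) * (Real.sqrt cP : ℂ) * omegaPM cP κ l z
  + (aM : ℂ) * (Real.sqrt cM : ℂ) * omegaPM cM κ l z

set_option maxHeartbeats 2000000 in
/-- Uniform lower bound for `|m(λ,z)|` for `λ ∈ Σ_{π-φ₀}`, `z ∈ Σ_φ`, `δ ∈ [0,δ*]`,
`σ ∈ [0,σ*]`, `κ ≥ 1`. -/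
theorem stmt4 (cP cM c₀ aP aM δs σs φ₀ φ : ℝ)
    (hcP : 0 < cP) (hcM : 0 < cM) (hc₀ : 0 < c₀) (haP : c₀ ≤ aP) (haM : c₀ ≤ aM)
    (hδs : 0 < δs) (hσs : 0 < σs)
    (hφ₀ : φ₀ ∈ Set.Ioo (π / 3) (π / 2)) (hφ : φ ∈ Set.Ioo 0 (φ₀ - π / 3)) :
    ∃ c₂ > (0 : ℝ), ∀ (l z : ℂ) (δ σ κ : ℝ), 1 ≤ κ →
      δ ∈ Set.Icc (0 : ℝ) δs → σ ∈ Set.Icc (0 : ℝ) σs →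
      l ≠ 0 → |l.arg| < π - φ₀ → z ≠ 0 → |z.arg| < φ →
      c₂ * (‖l‖ + κ
          + σ * ‖z‖ * (Real.sqrt (‖l‖) + Real.sqrt κ
              + Real.sqrt (cP * ‖z‖) + Real.sqrt (cM * ‖z‖))
          + δ * (‖l‖ + κ) * (Real.sqrt (‖l‖) + Real.sqrt κ
              + Real.sqrt (cP * ‖z‖) + Real.sqrt (cM * ‖z‖))
          + aP * (Real.sqrt (‖l‖) + Real.sqrt κ + Real.sqrt (cP * ‖z‖))
          + aM * (Real.sqrt (‖l‖) + Real.sqrt κ + Real.sqrt (cM * ‖z‖)))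
        ≤ ‖(stefanSymbol cP cM κ δ σ aP aM l z)‖ := by
  obtain ⟨hφ₀1, hφ₀2⟩ := hφ₀
  obtain ⟨hφ1, hφ2⟩ := hφ
  have hπ : (0:ℝ) < π := Real.pi_pos
  set Θ : ℝ := π - φ₀ with hΘdef
  have hΘ1 : π/2 < Θ := by rw [hΘdef]; linarith
  have hΘ2 : Θ < 2*π/3 := by rw [hΘdef]; linarith
  have hΘφ : Θ + φ < 2*π/3 := by rw [hΘdef]; linarith
  have hφ6 : φ < π/6 := by linarith
  clear_value Θ
  set ε : ℝ := π/2 - (3/4)*(Θ+φ) with hεdef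
  have hε : 0 < ε := by rw [hεdef]; linarith
  have hεπ : ε < π := by rw [hεdef]; linarith
  clear_value ε
  have hsin : 0 < Real.sin ε := Real.sin_pos_of_pos_of_lt_pi hε hεπ
  have hsqP : 0 < Real.sqrt cP := Real.sqrt_pos.mpr hcP
  have hsqM : 0 < Real.sqrt cM := Real.sqrt_pos.mpr hcM
  set cmin : ℝ := min (min (1/2) (Real.sqrt cP / 12)) (Real.sqrt cM / 12) with hcmdef
  have hcm0 : 0 < cmin := by
    rw [hcmdef]; positivity
  have hcm1 : cmin ≤ 1/2 := le_trans (min_le_left _ _) (min_le_left _ _)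
  have hcmP : cmin ≤ Real.sqrt cP / 12 := le_trans (min_le_left _ _) (min_le_right _ _)
  have hcmM : cmin ≤ Real.sqrt cM / 12 := min_le_right _ _
  clear_value cmin
  refine ⟨Real.sin ε * cmin, by positivity, ?_⟩
  intro l z δ σ κ hκ hδm hσm hl hla hz hza
  obtain ⟨hδ0, hδ1⟩ := hδm
  obtain ⟨hσ0, hσ1⟩ := hσm
  have hκ0 : (0:ℝ) < κ := by linarith
  have hκC : ((κ:ℝ) : ℂ) ≠ 0 := Complex.ofReal_ne_zero.mpr hκ0.ne'
  have hargκ : Complex.arg ((κ:ℝ) : ℂ) = 0 := Complex.arg_ofReal_of_nonneg hκ0.le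
  have hθl1 : -Θ < l.arg := (abs_lt.mp hla).1
  have hθl2 : l.arg < Θ := (abs_lt.mp hla).2
  -- the argument of A = l + κ
  have hAmem : l + (κ : ℂ) ≠ 0 ∧ min l.arg 0 ≤ Complex.arg (l + (κ:ℂ)) ∧
      Complex.arg (l + (κ:ℂ)) ≤ max l.arg 0 := by
    apply arg_add_mem hl hκC
    · exact lt_min (by linarith [Complex.neg_pi_lt_arg l]) (by linarith)
    · exact max_lt (by linarith [Complex.arg_le_pi l, hθl2]) (by linarith)
    · rcases le_total l.arg 0 with h | h
      · rw [min_eq_left h, max_eq_right h]; linarith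
      · rw [min_eq_right h, max_eq_left h]; linarith
    · exact min_le_left _ _
    · exact le_max_left _ _
    · rw [hargκ]; exact min_le_right _ _
    · rw [hargκ]; exact le_max_right _ _
  obtain ⟨hAne, hAarg1, hAarg2⟩ := hAmem
  set A : ℂ := l + (κ:ℂ) with hAdef
  set θ : ℝ := Complex.arg A with hθdef
  have hθ1 : -Θ < θ := lt_of_lt_of_le (lt_min (by linarith) (by linarith)) hAarg1
  have hθ2 : θ < Θ := lt_of_le_of_lt hAarg2 (max_lt (by linarith) (by linarith))
  set α : ℝ := z.arg with hαdef
  have hα1 : -φ < α := (abs_lt.mp hza).1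
  have hα2 : α < φ := (abs_lt.mp hza).2
  set ψ : ℝ := (3/4)*(θ + α) with hψdef
  clear_value ψ
  -- facts about D_pm for generic c > 0
  have key : ∀ c : ℝ, 0 < c →
      (A + (c:ℂ) * z ≠ 0 ∧ min θ α ≤ Complex.arg (A + (c:ℂ)*z) ∧
        Complex.arg (A + (c:ℂ)*z) ≤ max θ α) := by
    intro c hc
    have hcz : (c:ℂ) * z ≠ 0 := mul_ne_zero (Complex.ofReal_ne_zero.mpr hc.ne') hz
    have hargcz : Complex.arg ((c:ℂ)*z) = α := Complex.arg_real_mul z hc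
    apply arg_add_mem hAne hcz
    · exact lt_min (by linarith) (by linarith)
    · exact max_lt (by linarith) (by linarith)
    · rcases le_total θ α with h | h
      · rw [min_eq_left h, max_eq_right h]; linarith
      · rw [min_eq_right h, max_eq_left h]; linarith
    · exact min_le_left _ _
    · exact le_max_left _ _
    · rw [hargcz]; exact min_le_right _ _
    · rw [hargcz]; exact le_max_right _ _
  obtain ⟨hDPne, hDP1, hDP2⟩ := key cP hcP
  obtain ⟨hDMne, hDM1, hDM2⟩ := key cM hcM
  set DP : ℂ := A + (cP:ℂ)*z with hDPdef
  set DM : ℂ := A + (cM:ℂ)*z with hDMdef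
  set γP : ℝ := Complex.arg DP with hγPdef
  set γM : ℝ := Complex.arg DM with hγMdef
  -- omegas
  have hDP_eq : omegaPM cP κ l z = DP ^ ((1:ℂ)/2) := by
    rw [omegaPM, hDPdef, hAdef]
  have hDM_eq : omegaPM cM κ l z = DM ^ ((1:ℂ)/2) := by
    rw [omegaPM, hDMdef, hAdef]
  obtain ⟨hωPabs, hωParg⟩ := sqrt_abs_arg hDPne
  obtain ⟨hωMabs, hωMarg⟩ := sqrt_abs_arg hDMne
  set ωP : ℂ := DP ^ ((1:ℂ)/2) with hωPdef
  set ωM : ℂ := DM ^ ((1:ℂ)/2) with hωMdef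
  have hωPne : ωP ≠ 0 := by
    rw [← norm_ne_zero_iff, hωPabs]
    exact (Real.sqrt_pos.mpr (norm_pos_iff.mpr hDPne)).ne'
  have hωMne : ωM ≠ 0 := by
    rw [← norm_ne_zero_iff, hωMabs]
    exact (Real.sqrt_pos.mpr (norm_pos_iff.mpr hDMne)).ne'
  have hωPargγ : Complex.arg ωP = γP / 2 := by rw [hγPdef]; exact hωParg
  have hωMargγ : Complex.arg ωM = γM / 2 := by rw [hγMdef]; exact hωMarg
  -- bounds on γ
  have hγboundP1 : -Θ < γP := lt_of_lt_of_le (lt_min (by linarith) (by linarith)) hDP1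
  have hγboundP2 : γP < Θ := lt_of_le_of_lt hDP2 (max_lt (by linarith) (by linarith))
  have hγboundM1 : -Θ < γM := lt_of_lt_of_le (lt_min (by linarith) (by linarith)) hDM1
  have hγboundM2 : γM < Θ := lt_of_le_of_lt hDM2 (max_lt (by linarith) (by linarith))
  -- the four angle-window estimates
  have angle_window : ∀ γ : ℝ, min θ α ≤ γ → γ ≤ max θ α →
      |θ - ψ| ≤ π/2 - ε ∧ |γ/2 - ψ| ≤ π/2 - ε ∧ |θ + γ/2 - ψ| ≤ π/2 - ε ∧
        |α + γ/2 - ψ| ≤ π/2 - ε := by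
    intro γ hγ1 hγ2
    rcases le_total θ α with h | h
    · rw [min_eq_left h] at hγ1; rw [max_eq_right h] at hγ2
      refine ⟨abs_le.mpr ⟨?_, ?_⟩, abs_le.mpr ⟨?_, ?_⟩, abs_le.mpr ⟨?_, ?_⟩,
        abs_le.mpr ⟨?_, ?_⟩⟩ <;> rw [hψdef, hεdef] <;>
        linarith only [hθ1, hθ2, hα1, hα2, hγ1, hγ2, h, hφ1, hΘ1, hπ]
    · rw [min_eq_right h] at hγ1; rw [max_eq_left h] at hγ2
      refine ⟨abs_le.mpr ⟨?_, ?_⟩, abs_le.mpr ⟨?_, ?_⟩, abs_le.mpr ⟨?_, ?_⟩,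
        abs_le.mpr ⟨?_, ?_⟩⟩ <;> rw [hψdef, hεdef] <;>
        linarith only [hθ1, hθ2, hα1, hα2, hγ1, hγ2, h, hφ1, hΘ1, hπ]
  obtain ⟨hw1, hwP2, hwP3, hwP4⟩ := angle_window γP hDP1 hDP2
  obtain ⟨-, hwM2, hwM3, hwM4⟩ := angle_window γM hDM1 hDM2
  -- magnitude bound for A
  have hXnn : 0 ≤ ‖l‖ := norm_nonneg l
  have hZnn : 0 ≤ ‖z‖ := norm_nonneg z
  have hcos23 : Real.cos (2*π/3) = -(1/2) := by
    rw [show (2*π/3 : ℝ) = π - π/3 by ring, Real.cos_pi_sub, Real.cos_pi_div_three]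
  have hrel : -(1/2) * ‖l‖ ≤ l.re := by
    have hcos : -(1/2) ≤ Real.cos l.arg := by
      rw [← hcos23, ← Real.cos_abs l.arg]
      apply Real.cos_le_cos_of_nonneg_of_le_pi (abs_nonneg _) (by linarith)
      rw [abs_le]
      constructor <;> linarith only [hθl1, hθl2, hΘ2]
    have h1 := Complex.norm_mul_cos_arg l
    have h2 := mul_le_mul_of_nonneg_left hcos hXnn
    linarith only [h1, h2]
  have habsA2 : (‖A‖)^2 = (‖l‖)^2 + 2*κ*l.re + κ^2 := by
    rw [hAdef, Complex.sq_norm, Complex.sq_norm, Complex.normSq_apply, Complex.normSq_apply]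
    simp [Complex.add_re, Complex.add_im, Complex.ofReal_re, Complex.ofReal_im]
    ring
  have hM1 : (‖l‖ + κ)/2 ≤ ‖A‖ :=
    L_M1 hXnn hκ0.le hrel (norm_nonneg A) habsA2
  -- magnitude bound for D = A + c z
  have keyM : ∀ c : ℝ, 0 < c →
      (‖l‖ + κ + c * ‖z‖)/4 ≤ ‖(A + (c:ℂ)*z)‖ := by
    intro c hc
    have hcosθα : -(1/2) ≤ Real.cos (θ - α) := by
      rw [← hcos23, ← Real.cos_abs (θ - α)]
      apply Real.cos_le_cos_of_nonneg_of_le_pi (abs_nonneg _) (by linarith)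
      rw [abs_le]
      constructor <;> linarith only [hθ1, hθ2, hα1, hα2, hΘφ, hφ1, hΘ1]
    have hdot : ‖A‖ * ‖z‖ * Real.cos (θ - α)
        = A.re * z.re + A.im * z.im := by
      have hA0 : ‖A‖ ≠ 0 := (norm_ne_zero_iff.mpr hAne)
      have hz0 : ‖z‖ ≠ 0 := (norm_ne_zero_iff.mpr hz)
      rw [Real.cos_sub, hθdef, hαdef, Complex.cos_arg hAne, Complex.sin_arg,
        Complex.cos_arg hz, Complex.sin_arg]
      field_simp
    have hdotge : -(1/2) * (‖A‖ * ‖z‖) ≤ A.re * z.re + A.im * z.im := by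
      rw [← hdot]
      exact L_dotge (norm_nonneg A) hZnn hcosθα
    have hdotge2 : -(1/2) * (‖A‖ * (c * ‖z‖))
        ≤ c * (A.re * z.re + A.im * z.im) := by
      have h' := mul_le_mul_of_nonneg_left hdotge hc.le
      linarith only [h']
    have habsD2 : (‖(A + (c:ℂ)*z)‖)^2
        = (‖A‖)^2 + 2*(c*(A.re*z.re + A.im*z.im)) + (c*‖z‖)^2 := by
      have hz2 : (c*‖z‖)^2 = c^2 * (z.re^2 + z.im^2) := by
        rw [mul_pow, Complex.sq_norm, Complex.normSq_apply]; ring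
      rw [Complex.sq_norm, Complex.sq_norm, Complex.normSq_apply, Complex.normSq_apply, hz2]
      simp [Complex.add_re, Complex.add_im, Complex.mul_re, Complex.mul_im,
        Complex.ofReal_re, Complex.ofReal_im]
      ring
    have hstep : (‖A‖ + c * ‖z‖)/2 ≤ ‖(A + (c:ℂ)*z)‖ :=
      L_M2 (norm_nonneg A) (mul_nonneg hc.le hZnn) hdotge2 (norm_nonneg _) habsD2
    have hq : (‖l‖ + κ + c * ‖z‖)/4
        ≤ ((‖l‖ + κ)/2 + c * ‖z‖)/2 := by
      linarith only [mul_nonneg hc.le hZnn]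
    linarith only [hq, hstep, hM1, mul_nonneg hc.le hZnn]
  have hM2P : (‖l‖ + κ + cP * ‖z‖)/4 ≤ ‖DP‖ := by
    rw [hDPdef]; exact keyM cP hcP
  have hM2M : (‖l‖ + κ + cM * ‖z‖)/4 ≤ ‖DM‖ := by
    rw [hDMdef]; exact keyM cM hcM
  have hM3P : (Real.sqrt (‖l‖) + Real.sqrt κ + Real.sqrt (cP * ‖z‖))/6
      ≤ Real.sqrt (‖DP‖) :=
    L_sqrt hXnn hκ0.le (mul_nonneg hcP.le hZnn) hM2P
  have hM3M : (Real.sqrt (‖l‖) + Real.sqrt κ + Real.sqrt (cM * ‖z‖))/6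
      ≤ Real.sqrt (‖DM‖) :=
    L_sqrt hXnn hκ0.le (mul_nonneg hcM.le hZnn) hM2M
  -- rotation and terms
  set R : ℂ := Complex.exp (((-ψ : ℝ) : ℂ) * Complex.I) with hRdef
  have hRabs : ‖R‖ = 1 := by
    rw [hRdef]; exact Complex.norm_exp_ofReal_mul_I (-ψ)
  set T2 : ℂ := ((σ * Real.sqrt cP : ℝ) : ℂ) * (z * ωP) with hT2def
  set T3 : ℂ := ((σ * Real.sqrt cM : ℝ) : ℂ) * (z * ωM) with hT3def
  set T4 : ℂ := ((δ * Real.sqrt cP : ℝ) : ℂ) * (A * ωP) with hT4def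
  set T5 : ℂ := ((δ * Real.sqrt cM : ℝ) : ℂ) * (A * ωM) with hT5def
  set T6 : ℂ := ((aP * Real.sqrt cP : ℝ) : ℂ) * ωP with hT6def
  set T7 : ℂ := ((aM * Real.sqrt cM : ℝ) : ℂ) * ωM with hT7def
  have hm : stefanSymbol cP cM κ δ σ aP aM l z = A + T2 + T3 + T4 + T5 + T6 + T7 := by
    rw [hT2def, hT3def, hT4def, hT5def, hT6def, hT7def, stefanSymbol,
      hDP_eq, hDM_eq, hAdef]
    push_cast
    ring
  -- term-wise real part bounds
  have t1 : Real.sin ε * ‖A‖ ≤ (R * A).re := by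
    rw [hRdef]
    apply re_rot_ge A ψ ε hε
    rw [← hθdef]
    exact hw1
  have haPpos : 0 < aP * Real.sqrt cP := mul_pos (lt_of_lt_of_le hc₀ haP) hsqP
  have haMpos : 0 < aM * Real.sqrt cM := mul_pos (lt_of_lt_of_le hc₀ haM) hsqM
  have t6 : Real.sin ε * ‖T6‖ ≤ (R * T6).re := by
    rw [hRdef, hT6def]
    apply re_rot_ge _ ψ ε hε
    rw [Complex.arg_real_mul _ haPpos, hωPargγ]
    exact hwP2
  have t7 : Real.sin ε * ‖T7‖ ≤ (R * T7).re := by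
    rw [hRdef, hT7def]
    apply re_rot_ge _ ψ ε hε
    rw [Complex.arg_real_mul _ haMpos, hωMargγ]
    exact hwM2
  have hargAωP : Complex.arg (A * ωP) = θ + γP / 2 := by
    rw [arg_mul' hAne hωPne
      (by rw [← hθdef, hωPargγ]; linarith only [hθ1, hγboundP1, hΘ2, hπ])
      (by rw [← hθdef, hωPargγ]; linarith only [hθ2, hγboundP2, hΘ2, hπ]), ← hθdef, hωPargγ]
  have hargAωM : Complex.arg (A * ωM) = θ + γM / 2 := by
    rw [arg_mul' hAne hωMne
      (by rw [← hθdef, hωMargγ]; linarith only [hθ1, hγboundM1, hΘ2, hπ])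
      (by rw [← hθdef, hωMargγ]; linarith only [hθ2, hγboundM2, hΘ2, hπ]), ← hθdef, hωMargγ]
  have hargzωP : Complex.arg (z * ωP) = α + γP / 2 := by
    rw [arg_mul' hz hωPne
      (by rw [← hαdef, hωPargγ]; linarith only [hα1, hγboundP1, hΘ2, hφ6, hπ])
      (by rw [← hαdef, hωPargγ]; linarith only [hα2, hγboundP2, hΘ2, hφ6, hπ]), ← hαdef, hωPargγ]
  have hargzωM : Complex.arg (z * ωM) = α + γM / 2 := by
    rw [arg_mul' hz hωMne
      (by rw [← hαdef, hωMargγ]; linarith only [hα1, hγboundM1, hΘ2, hφ6, hπ])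
      (by rw [← hαdef, hωMargγ]; linarith only [hα2, hγboundM2, hΘ2, hφ6, hπ]), ← hαdef, hωMargγ]
  have t4 : Real.sin ε * ‖T4‖ ≤ (R * T4).re := by
    rcases eq_or_lt_of_le hδ0 with h0 | hδpos
    · rw [hT4def, ← h0]
      simp
    · rw [hRdef, hT4def]
      apply re_rot_ge _ ψ ε hε
      rw [Complex.arg_real_mul _ (mul_pos hδpos hsqP), hargAωP]
      exact hwP3
  have t5 : Real.sin ε * ‖T5‖ ≤ (R * T5).re := by
    rcases eq_or_lt_of_le hδ0 with h0 | hδpos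
    · rw [hT5def, ← h0]
      simp
    · rw [hRdef, hT5def]
      apply re_rot_ge _ ψ ε hε
      rw [Complex.arg_real_mul _ (mul_pos hδpos hsqM), hargAωM]
      exact hwM3
  have t2 : Real.sin ε * ‖T2‖ ≤ (R * T2).re := by
    rcases eq_or_lt_of_le hσ0 with h0 | hσpos
    · rw [hT2def, ← h0]
      simp
    · rw [hRdef, hT2def]
      apply re_rot_ge _ ψ ε hε
      rw [Complex.arg_real_mul _ (mul_pos hσpos hsqP), hargzωP]
      exact hwP4
  have t3 : Real.sin ε * ‖T3‖ ≤ (R * T3).re := by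
    rcases eq_or_lt_of_le hσ0 with h0 | hσpos
    · rw [hT3def, ← h0]
      simp
    · rw [hRdef, hT3def]
      apply re_rot_ge _ ψ ε hε
      rw [Complex.arg_real_mul _ (mul_pos hσpos hsqM), hargzωM]
      exact hwM4
  -- absolute values of the terms
  have habsT2 : ‖T2‖
      = σ * Real.sqrt cP * (‖z‖ * Real.sqrt (‖DP‖)) := by
    rw [hT2def, norm_mul, norm_mul, Complex.norm_real, Real.norm_eq_abs,
      _root_.abs_of_nonneg (mul_nonneg hσ0 hsqP.le), hωPabs]
  have habsT3 : ‖T3‖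
      = σ * Real.sqrt cM * (‖z‖ * Real.sqrt (‖DM‖)) := by
    rw [hT3def, norm_mul, norm_mul, Complex.norm_real, Real.norm_eq_abs,
      _root_.abs_of_nonneg (mul_nonneg hσ0 hsqM.le), hωMabs]
  have habsT4 : ‖T4‖
      = δ * Real.sqrt cP * (‖A‖ * Real.sqrt (‖DP‖)) := by
    rw [hT4def, norm_mul, norm_mul, Complex.norm_real, Real.norm_eq_abs,
      _root_.abs_of_nonneg (mul_nonneg hδ0 hsqP.le), hωPabs]
  have habsT5 : ‖T5‖
      = δ * Real.sqrt cM * (‖A‖ * Real.sqrt (‖DM‖)) := by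
    rw [hT5def, norm_mul, norm_mul, Complex.norm_real, Real.norm_eq_abs,
      _root_.abs_of_nonneg (mul_nonneg hδ0 hsqM.le), hωMabs]
  have habsT6 : ‖T6‖ = aP * Real.sqrt cP * Real.sqrt (‖DP‖) := by
    rw [hT6def, norm_mul, Complex.norm_real, Real.norm_eq_abs, _root_.abs_of_pos haPpos, hωPabs]
  have habsT7 : ‖T7‖ = aM * Real.sqrt cM * Real.sqrt (‖DM‖) := by
    rw [hT7def, norm_mul, Complex.norm_real, Real.norm_eq_abs, _root_.abs_of_pos haMpos, hωMabs]
  have hSPnn : (0:ℝ) ≤ Real.sqrt (‖l‖) + Real.sqrt κ + Real.sqrt (cP * ‖z‖) := by positivity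
  have hSMnn : (0:ℝ) ≤ Real.sqrt (‖l‖) + Real.sqrt κ + Real.sqrt (cM * ‖z‖) := by positivity
  -- lower bounds transferred through sin ε
  have r1 : Real.sin ε * ((‖l‖ + κ)/2) ≤ (R*A).re := by
    refine le_trans ?_ t1
    apply mul_le_mul_of_nonneg_left ?_ hsin.le
    exact hM1
  have r2 : Real.sin ε * (σ * Real.sqrt cP * (‖z‖ * ((Real.sqrt (‖l‖) + Real.sqrt κ + Real.sqrt (cP * ‖z‖))/6))) ≤ (R*T2).re := by
    refine le_trans ?_ t2
    apply mul_le_mul_of_nonneg_left ?_ hsin.le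
    rw [habsT2]
    exact mul_le_mul_of_nonneg_left (mul_le_mul_of_nonneg_left hM3P hZnn)
      (mul_nonneg hσ0 hsqP.le)
  have r3 : Real.sin ε * (σ * Real.sqrt cM * (‖z‖ * ((Real.sqrt (‖l‖) + Real.sqrt κ + Real.sqrt (cM * ‖z‖))/6))) ≤ (R*T3).re := by
    refine le_trans ?_ t3
    apply mul_le_mul_of_nonneg_left ?_ hsin.le
    rw [habsT3]
    exact mul_le_mul_of_nonneg_left (mul_le_mul_of_nonneg_left hM3M hZnn)
      (mul_nonneg hσ0 hsqM.le)
  have r4 : Real.sin ε * (δ * Real.sqrt cP * (((‖l‖ + κ)/2) * ((Real.sqrt (‖l‖) + Real.sqrt κ + Real.sqrt (cP * ‖z‖))/6)))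
      ≤ (R*T4).re := by
    refine le_trans ?_ t4
    apply mul_le_mul_of_nonneg_left ?_ hsin.le
    rw [habsT4]
    apply mul_le_mul_of_nonneg_left ?_ (mul_nonneg hδ0 hsqP.le)
    exact mul_le_mul hM1 hM3P (by positivity) (norm_nonneg A)
  have r5 : Real.sin ε * (δ * Real.sqrt cM * (((‖l‖ + κ)/2) * ((Real.sqrt (‖l‖) + Real.sqrt κ + Real.sqrt (cM * ‖z‖))/6)))
      ≤ (R*T5).re := by
    refine le_trans ?_ t5
    apply mul_le_mul_of_nonneg_left ?_ hsin.le
    rw [habsT5]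
    apply mul_le_mul_of_nonneg_left ?_ (mul_nonneg hδ0 hsqM.le)
    exact mul_le_mul hM1 hM3M (by positivity) (norm_nonneg A)
  have r6 : Real.sin ε * (aP * Real.sqrt cP * ((Real.sqrt (‖l‖) + Real.sqrt κ + Real.sqrt (cP * ‖z‖))/6)) ≤ (R*T6).re := by
    refine le_trans ?_ t6
    apply mul_le_mul_of_nonneg_left ?_ hsin.le
    rw [habsT6]
    exact mul_le_mul_of_nonneg_left hM3P haPpos.le
  have r7 : Real.sin ε * (aM * Real.sqrt cM * ((Real.sqrt (‖l‖) + Real.sqrt κ + Real.sqrt (cM * ‖z‖))/6)) ≤ (R*T7).re := by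
    refine le_trans ?_ t7
    apply mul_le_mul_of_nonneg_left ?_ hsin.le
    rw [habsT7]
    exact mul_le_mul_of_nonneg_left hM3M haMpos.le
  -- sum of real parts
  have hre_sum : (R * stefanSymbol cP cM κ δ σ aP aM l z).re
      = (R*A).re + (R*T2).re + (R*T3).re + (R*T4).re + (R*T5).re + (R*T6).re + (R*T7).re := by
    rw [hm, mul_add, mul_add, mul_add, mul_add, mul_add, mul_add]
    simp [Complex.add_re]
  have habs_ge : (R * stefanSymbol cP cM κ δ σ aP aM l z).re
      ≤ ‖(stefanSymbol cP cM κ δ σ aP aM l z)‖ := by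
    calc (R * stefanSymbol cP cM κ δ σ aP aM l z).re
        ≤ ‖(R * stefanSymbol cP cM κ δ σ aP aM l z)‖ := Complex.re_le_norm _
      _ = ‖(stefanSymbol cP cM κ δ σ aP aM l z)‖ := by
          rw [norm_mul, hRabs, one_mul]
  -- the bracket comparison
  have hXκnn : (0:ℝ) ≤ ‖l‖ + κ := by linarith only [hXnn, hκ0]
  have hsum1 : Real.sqrt (‖l‖) + Real.sqrt κ + Real.sqrt (cP * ‖z‖)
      + Real.sqrt (cM * ‖z‖) ≤ (Real.sqrt (‖l‖) + Real.sqrt κ + Real.sqrt (cP * ‖z‖)) + (Real.sqrt (‖l‖) + Real.sqrt κ + Real.sqrt (cM * ‖z‖)) := by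
    linarith only [Real.sqrt_nonneg (‖l‖), Real.sqrt_nonneg κ]
  have q1 : cmin * (‖l‖ + κ) ≤ (‖l‖ + κ)/2 := by
    have := mul_le_mul_of_nonneg_right hcm1 hXκnn
    linarith only [this]
  have hσZnn : 0 ≤ σ * ‖z‖ := mul_nonneg hσ0 hZnn
  have hδXκnn : 0 ≤ δ * (‖l‖ + κ) := mul_nonneg hδ0 hXκnn
  have q2a : σ * ‖z‖ * (Real.sqrt (‖l‖) + Real.sqrt κ
      + Real.sqrt (cP * ‖z‖) + Real.sqrt (cM * ‖z‖))
      ≤ σ * ‖z‖ * ((Real.sqrt (‖l‖) + Real.sqrt κ + Real.sqrt (cP * ‖z‖)) + (Real.sqrt (‖l‖) + Real.sqrt κ + Real.sqrt (cM * ‖z‖))) :=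
    mul_le_mul_of_nonneg_left hsum1 hσZnn
  have q3a : δ * (‖l‖ + κ) * (Real.sqrt (‖l‖) + Real.sqrt κ
      + Real.sqrt (cP * ‖z‖) + Real.sqrt (cM * ‖z‖))
      ≤ δ * (‖l‖ + κ) * ((Real.sqrt (‖l‖) + Real.sqrt κ + Real.sqrt (cP * ‖z‖)) + (Real.sqrt (‖l‖) + Real.sqrt κ + Real.sqrt (cM * ‖z‖))) :=
    mul_le_mul_of_nonneg_left hsum1 hδXκnn
  have e2P := mul_le_mul_of_nonneg_right hcmP (mul_nonneg hσZnn hSPnn)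
  have e2M := mul_le_mul_of_nonneg_right hcmM (mul_nonneg hσZnn hSMnn)
  have e3P := mul_le_mul_of_nonneg_right hcmP (mul_nonneg hδXκnn hSPnn)
  have e3M := mul_le_mul_of_nonneg_right hcmM (mul_nonneg hδXκnn hSMnn)
  have haPnn : (0:ℝ) ≤ aP := le_trans hc₀.le haP
  have haMnn : (0:ℝ) ≤ aM := le_trans hc₀.le haM
  have e6 := mul_le_mul_of_nonneg_right hcmP (mul_nonneg haPnn hSPnn)
  have e7 := mul_le_mul_of_nonneg_right hcmM (mul_nonneg haMnn hSMnn)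
  have q2b := mul_le_mul_of_nonneg_left q2a hcm0.le
  have q3b := mul_le_mul_of_nonneg_left q3a hcm0.le
  have hbr : cmin * (‖l‖ + κ
      + σ * ‖z‖ * (Real.sqrt (‖l‖) + Real.sqrt κ
          + Real.sqrt (cP * ‖z‖) + Real.sqrt (cM * ‖z‖))
      + δ * (‖l‖ + κ) * (Real.sqrt (‖l‖) + Real.sqrt κ
          + Real.sqrt (cP * ‖z‖) + Real.sqrt (cM * ‖z‖))
      + aP * (Real.sqrt (‖l‖) + Real.sqrt κ + Real.sqrt (cP * ‖z‖)) + aM * (Real.sqrt (‖l‖) + Real.sqrt κ + Real.sqrt (cM * ‖z‖)))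
      ≤ (‖l‖ + κ)/2
        + σ * Real.sqrt cP * (‖z‖ * ((Real.sqrt (‖l‖) + Real.sqrt κ + Real.sqrt (cP * ‖z‖))/6))
        + σ * Real.sqrt cM * (‖z‖ * ((Real.sqrt (‖l‖) + Real.sqrt κ + Real.sqrt (cM * ‖z‖))/6))
        + δ * Real.sqrt cP * (((‖l‖ + κ)/2) * ((Real.sqrt (‖l‖) + Real.sqrt κ + Real.sqrt (cP * ‖z‖))/6))
        + δ * Real.sqrt cM * (((‖l‖ + κ)/2) * ((Real.sqrt (‖l‖) + Real.sqrt κ + Real.sqrt (cM * ‖z‖))/6))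
        + aP * Real.sqrt cP * ((Real.sqrt (‖l‖) + Real.sqrt κ + Real.sqrt (cP * ‖z‖))/6)
        + aM * Real.sqrt cM * ((Real.sqrt (‖l‖) + Real.sqrt κ + Real.sqrt (cM * ‖z‖))/6) := by
    linarith only [q1, q2b, q3b, e2P, e2M, e3P, e3M, e6, e7,
      mul_nonneg (mul_nonneg hσZnn hSPnn) hsqP.le,
      mul_nonneg (mul_nonneg hσZnn hSMnn) hsqM.le,
      mul_nonneg (mul_nonneg hδXκnn hSPnn) hsqP.le,
      mul_nonneg (mul_nonneg hδXκnn hSMnn) hsqM.le,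
      mul_nonneg (mul_nonneg haPnn hSPnn) hsqP.le,
      mul_nonneg (mul_nonneg haMnn hSMnn) hsqM.le]
  have hbr2 := mul_le_mul_of_nonneg_left hbr hsin.le
  refine le_trans ?_ habs_ge
  rw [hre_sum]
  linarith only [hbr2, r1, r2, r3, r4, r5, r6, r7]
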